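/- Let $V$ be a finite-dimensional $k$-vector space, let $0 < a_1 < \cdots < a_r \le \dim V$, and let $E_1 \subseteq \cdots \subseteq E_r \subseteq V$ and $F_1 \subseteq \cdots \subseteq F_r \subseteq V$ be two flags with $\dim E_i = \dim F_i = a_i$ for all $i$. Then there exists a flag $G_1 \subseteq \cdots \subseteq G_r \subseteq V \times V$ with $\dim G_i = a_i$, $p_1(G_i) = E_i$ and $p_2(G_i) = F_i$ for all $i$. -/

import Mathlib

open Submodule

section Aux

variable {k V : Type*} [Field k] [AddCommGroup V] [Module k V] [FiniteDimensional k V]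

/-- Every submodule is the span of `finrank` many vectors of the ambient space. -/
lemma exists_span_fun (W : Submodule k V) :
    ∃ c : Fin (Module.finrank k W) → V, Submodule.span k (Set.range c) = W := by
  let b := Module.finBasis k W
  refine ⟨fun j => (b j : V), ?_⟩
  have h : Set.range (fun j => (b j : V)) = W.subtype '' Set.range b := by
    rw [← Set.range_comp]; rfl
  rw [h, ← Submodule.map_span, b.span_eq, Submodule.map_top, Submodule.range_subtype]

lemma image_iio_eq_range {m : ℕ} (c : Fin m → V) (e : ℕ → V)
    (he : ∀ j (h : j < m), e j = c ⟨j, h⟩) : e '' Set.Iio m = Set.range c := by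
  ext x
  constructor
  · rintro ⟨j, hj, rfl⟩; exact ⟨⟨j, hj⟩, (he j hj).symm⟩
  · rintro ⟨i, rfl⟩; exact ⟨i, i.isLt, he i i.isLt⟩

lemma image_ico_eq_range {m d : ℕ} (c : Fin d → V) (e : ℕ → V)
    (he : ∀ j, m ≤ j → ∀ h : j - m < d, e j = c ⟨j - m, h⟩) :
    e '' Set.Ico m (m + d) = Set.range c := by
  ext x
  constructor
  · rintro ⟨j, ⟨hj1, hj2⟩, rfl⟩
    have h : j - m < d := by omega
    exact ⟨⟨j - m, h⟩, (he j hj1 h).symm⟩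
  · rintro ⟨i, rfl⟩
    refine ⟨m + i, ⟨by omega, by omega⟩, ?_⟩
    rw [he (m + i) (by omega) (by omega)]
    congr 1
    exact Fin.ext (by simp)

/-- An adapted "spanning sequence" for a flag: a sequence of vectors whose initial
segments of lengths `a i` span the members of the flag. -/
lemma exists_adapted_seq : ∀ (n : ℕ) (a : Fin (n + 1) → ℕ) (E : Fin (n + 1) → Submodule k V),
    Monotone E → (∀ i, Module.finrank k (E i) = a i) →
    ∃ e : ℕ → V, ∀ i, E i = Submodule.span k (e '' Set.Iio (a i)) := by
  intro n
  induction n with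
  | zero =>
    intro a E _ hdim
    obtain ⟨c, hc⟩ := exists_span_fun (E 0)
    refine ⟨fun j => if h : j < Module.finrank k (E 0) then c ⟨j, h⟩ else 0, fun i => ?_⟩
    have hi : i = 0 := Fin.eq_zero i
    subst hi
    rw [← hdim 0, image_iio_eq_range c _ (fun j h => dif_pos h), hc]
  | succ n ih =>
    intro a E hmono hdim
    obtain ⟨e, he⟩ := ih (a ∘ Fin.castSucc) (E ∘ Fin.castSucc)
      (fun i j hij => hmono (by simpa using hij)) (fun i => hdim _)
    set iN : Fin (n + 2) := (Fin.last n).castSucc with hiN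
    set iL : Fin (n + 2) := Fin.last (n + 1) with hiL
    have hUW : E iN ≤ E iL := hmono (Fin.le_last _)
    set U' : Submodule k (E iL) := (E iN).comap (E iL).subtype with hU'
    obtain ⟨C, hC⟩ := Submodule.exists_isCompl U'
    set D : Submodule k V := C.map (E iL).subtype with hDdef
    have hsup : E iN ⊔ D = E iL := by
      calc E iN ⊔ D = U'.map (E iL).subtype ⊔ C.map (E iL).subtype := by
            rw [hU', Submodule.map_comap_subtype, inf_eq_right.mpr hUW]
        _ = (U' ⊔ C).map (E iL).subtype := (Submodule.map_sup _ _ _).symm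
        _ = E iL := by rw [hC.codisjoint.eq_top, Submodule.map_top, Submodule.range_subtype]
    have hsum : a iN + Module.finrank k D = a iL := by
      have h1 : Module.finrank k U' = a iN := by
        rw [(Submodule.comapSubtypeEquivOfLe hUW).finrank_eq, hdim]
      have h2 : Module.finrank k D =  Module.finrank k C :=
        ((C.equivMapOfInjective (E iL).subtype (E iL).injective_subtype)).finrank_eq.symm
      have h3 := Submodule.finrank_add_eq_of_isCompl hC
      rw [h2, ← h1, h3, hdim]
    obtain ⟨d, c, hc, hsum⟩ : ∃ d : ℕ, ∃ c : Fin d → V,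
        Submodule.span k (Set.range c) = D ∧ a iN + d = a iL := by
      obtain ⟨c, hc⟩ := exists_span_fun D
      exact ⟨_, c, hc, hsum⟩
    set m : ℕ := a iN with hm
    refine ⟨fun j => if h : j < m then e j else if h2 : j - m < d then c ⟨j - m, h2⟩ else 0,
      fun i => ?_⟩
    refine Fin.lastCases ?_ ?_ i
    · -- i = last
      have haiL : a iL = m + d := hsum.symm
      rw [show Fin.last (n + 1) = iL from rfl, haiL]
      rw [← Set.Iio_union_Ico_eq_Iio (le_add_of_nonneg_right (Nat.zero_le d)),
        Set.image_union, Submodule.span_union]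
      have hA : (fun j => if h : j < m then e j else if h2 : j - m < d then c ⟨j - m, h2⟩ else 0)
          '' Set.Iio m = e '' Set.Iio m := Set.image_congr (fun j hj => dif_pos hj)
      have hB : (fun j => if h : j < m then e j else if h2 : j - m < d then c ⟨j - m, h2⟩ else 0)
          '' Set.Ico m (m + d) = Set.range c :=
        image_ico_eq_range c _ (fun j hj h => by rw [dif_neg (by omega), dif_pos h])
      rw [hA, hB, hc]
      have hEN : E iN = Submodule.span k (e '' Set.Iio m) := by
        rw [hm]; exact he (Fin.last n)
      rw [← hEN, hsup]
    · -- i = castSucc i0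
      intro i0
      have hle : a i0.castSucc ≤ m := by
        rw [← hdim i0.castSucc, hm, ← hdim iN]
        exact Submodule.finrank_mono (hmono (Fin.castSucc_le_castSucc_iff.mpr (Fin.le_last _)))
      have hA : (fun j => if h : j < m then e j else if h2 : j - m < d then c ⟨j - m, h2⟩ else 0)
          '' Set.Iio (a i0.castSucc) = e '' Set.Iio (a i0.castSucc) :=
        Set.image_congr (fun j hj => dif_pos (lt_of_lt_of_le hj hle))
      rw [hA]
      exact he i0

end Aux

/-- **Nonemptiness of the fibers (surjectivity of `p`).** Given two flags
`E₁ ⊆ ⋯ ⊆ E_r` and `F₁ ⊆ ⋯ ⊆ F_r` of type `(a₁ < ⋯ < a_r)` in a finite-dimensional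
vector space `V`, there exists a flag `G₁ ⊆ ⋯ ⊆ G_r ⊆ V × V` with `dim G_i = a_i`,
`p₁(G_i) = E_i` and `p₂(G_i) = F_i` for all `i`. -/
theorem exists_flag_over_pair {k V : Type*} [Field k] [AddCommGroup V] [Module k V]
    [FiniteDimensional k V] {n : ℕ} (a : Fin (n + 1) → ℕ)
    (ha : StrictMono a) (ha0 : 0 < a 0) (han : a (Fin.last n) ≤ Module.finrank k V)
    (E F : Fin (n + 1) → Submodule k V) (hEmono : Monotone E) (hFmono : Monotone F)
    (hEdim : ∀ i, Module.finrank k (E i) = a i) (hFdim : ∀ i, Module.finrank k (F i) = a i) :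
    ∃ G : Fin (n + 1) → Submodule k (V × V),
      Monotone G ∧ ∀ i, Module.finrank k (G i) = a i ∧
        Submodule.map (LinearMap.fst k V V) (G i) = E i ∧
        Submodule.map (LinearMap.snd k V V) (G i) = F i := by
  classical
  obtain ⟨e, he⟩ := exists_adapted_seq n a E hEmono hEdim
  obtain ⟨f, hf⟩ := exists_adapted_seq n a F hFmono hFdim
  set g : ℕ → V × V := fun j => (e j, f j) with hg
  refine ⟨fun i => Submodule.span k (g '' Set.Iio (a i)), ?_, fun i => ?_⟩
  · intro i j hij
    exact Submodule.span_mono (Set.image_mono (Set.Iio_subset_Iio (ha.monotone hij)))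
  · have hfst : Submodule.map (LinearMap.fst k V V) (Submodule.span k (g '' Set.Iio (a i)))
        = E i := by
      rw [Submodule.map_span, Set.image_image]
      exact (he i).symm
    have hsnd : Submodule.map (LinearMap.snd k V V) (Submodule.span k (g '' Set.Iio (a i)))
        = F i := by
      rw [Submodule.map_span, Set.image_image]
      exact (hf i).symm
    refine ⟨le_antisymm ?_ ?_, hfst, hsnd⟩
    · show Module.finrank k (Submodule.span k (g '' Set.Iio (a i))) ≤ a i
      have h1 : g '' Set.Iio (a i) = Set.range (fun j : Fin (a i) => g j) := by
        ext x
        constructor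
        · rintro ⟨j, hj, rfl⟩; exact ⟨⟨j, hj⟩, rfl⟩
        · rintro ⟨j, rfl⟩; exact ⟨j, j.isLt, rfl⟩
      rw [h1]
      simpa [Set.finrank] using finrank_range_le_card (R := k) (fun j : Fin (a i) => g j)
    · show a i ≤ Module.finrank k (Submodule.span k (g '' Set.Iio (a i)))
      calc a i = Module.finrank k (E i) := (hEdim i).symm
        _ = Module.finrank k
            (Submodule.map (LinearMap.fst k V V) (Submodule.span k (g '' Set.Iio (a i)))) := by
          rw [hfst]
        _ ≤ Module.finrank k (Submodule.span k (g '' Set.Iio (a i))) :=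
          Submodule.finrank_map_le _ _
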